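/- Let n ≥ 3 be an odd integer and m ≥ 2 an even integer. Then the corona graph P_n ∘ P_m admits an edge labeling f* : E(P_n ∘ P_m) → {0,1} whose induced vertex labeling f satisfies e_f(0) = n·m − 1, e_f(1) = n·m, v_f(0) = (n·m + n + 1)/2, and v_f(1) = (n + n·m − 1)/2. In particular |(v_f(0) + e_f(0)) − (v_f(1) + e_f(1))| ≤ 1, so P_n ∘ P_m is total edge product cordial for odd n ≥ 3 and even m. -/

import Mathlib

open scoped Classical
open Finset SimpleGraph

/-- Adjacency relation of the corona product `G ∘ H`: take one copy of `G` and,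
for each vertex `i` of `G`, a copy of `H` (indexed by `i`), joining `i` to every
vertex of its copy of `H`. -/
def coronaAdj {α β : Type*} (G : SimpleGraph α) (H : SimpleGraph β) :
    α ⊕ α × β → α ⊕ α × β → Prop
  | Sum.inl u, Sum.inl v => G.Adj u v
  | Sum.inl u, Sum.inr (i, _) => u = i
  | Sum.inr (i, _), Sum.inl u => u = i
  | Sum.inr (i, x), Sum.inr (j, y) => i = j ∧ H.Adj x y

/-- The corona product `G ∘ H` of two simple graphs. -/
def corona {α β : Type*} (G : SimpleGraph α) (H : SimpleGraph β) :
    SimpleGraph (α ⊕ α × β) where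
  Adj := coronaAdj G H
  symm := by
    refine ⟨?_⟩
    rintro (u | ⟨i, x⟩) (v | ⟨j, y⟩) h <;>
      simp only [coronaAdj] at h ⊢
    · exact h.symm
    · exact h
    · exact h
    · exact ⟨h.1.symm, h.2.symm⟩
  loopless := by
    refine ⟨?_⟩
    rintro (u | ⟨i, x⟩) h <;> simp only [coronaAdj] at h
    · exact G.irrefl h
    · exact H.irrefl h.2

/-- The vertex labeling induced by an edge labeling `f`: the label of `v` is the
product of the labels of the edges incident to `v` (an empty product is `1`). -/
noncomputable def inducedLabel {α : Type*} [Fintype α] (G : SimpleGraph α)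
    (f : Sym2 α → ℕ) (v : α) : ℕ :=
  ∏ u ∈ Finset.univ.filter (fun u => G.Adj v u), f s(v, u)

/-- `eCount G f i` is the number of edges of `G` labeled `i` by `f`. -/
noncomputable def eCount {α : Type*} [Fintype α] (G : SimpleGraph α)
    (f : Sym2 α → ℕ) (i : ℕ) : ℕ :=
  (G.edgeFinset.filter (fun e => f e = i)).card

/-- `vCount G f i` is the number of vertices of `G` whose induced label is `i`. -/
noncomputable def vCount {α : Type*} [Fintype α] (G : SimpleGraph α)
    (f : Sym2 α → ℕ) (i : ℕ) : ℕ :=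
  (Finset.univ.filter (fun v => inducedLabel G f v = i)).card

/-- `f` is a total edge product cordial labeling of `G`: it labels every edge `0` or `1`,
and `|(v_f(0) + e_f(0)) - (v_f(1) + e_f(1))| ≤ 1`. -/
def IsTotalEdgeProductCordialLabeling {α : Type*} [Fintype α] (G : SimpleGraph α)
    (f : Sym2 α → ℕ) : Prop :=
  (∀ e ∈ G.edgeSet, f e = 0 ∨ f e = 1) ∧
  |((vCount G f 0 : ℤ) + (eCount G f 0 : ℤ)) - ((vCount G f 1 : ℤ) + (eCount G f 1 : ℤ))| ≤ 1

/-- `G` is total edge product cordial if it admits a total edge product cordial labeling. -/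
def IsTotalEdgeProductCordial {α : Type*} [Fintype α] (G : SimpleGraph α) : Prop :=
  ∃ f : Sym2 α → ℕ, IsTotalEdgeProductCordialLabeling G f

namespace CoronaTEPC

/-- successor inside `Fin N` without wrap-around (identity at the top). -/
def fsucc {N : ℕ} (i : Fin N) : Fin N :=
  if h : i.val + 1 < N then ⟨i.val + 1, h⟩ else i

lemma fsucc_val {N : ℕ} (i : Fin N) (h : i.val + 1 < N) : (fsucc i).val = i.val + 1 := by
  simp [fsucc, h]

/-- The edge-labeling function on ordered pairs of vertices. -/
def gfun (n m kk hh : ℕ) : (Fin n ⊕ Fin n × Fin m) → (Fin n ⊕ Fin n × Fin m) → ℕ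
  | Sum.inl i, Sum.inl j => if i.val ≤ kk ∧ j.val ≤ kk then 1 else 0
  | Sum.inl _, Sum.inr p => if p.1.val < kk ∨ (p.1.val = kk ∧ p.2.val < hh) then 1 else 0
  | Sum.inr p, Sum.inl _ => if p.1.val < kk ∨ (p.1.val = kk ∧ p.2.val < hh) then 1 else 0
  | Sum.inr p, Sum.inr q =>
      if min p.1.val q.1.val < kk ∨
          (p.1.val = kk ∧ q.1.val = kk ∧ min p.2.val q.2.val < hh) then 1 else 0

lemma gfun_symm (n m kk hh : ℕ) (a b : Fin n ⊕ Fin n × Fin m) :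
    gfun n m kk hh a b = gfun n m kk hh b a := by
  rcases a with i | p <;> rcases b with j | q <;> simp only [gfun] <;>
    exact if_congr (by omega) rfl rfl

/-- The edge labeling as a function on `Sym2`. -/
def fdef (n m kk hh : ℕ) : Sym2 (Fin n ⊕ Fin n × Fin m) → ℕ :=
  Sym2.lift ⟨gfun n m kk hh, gfun_symm n m kk hh⟩

@[simp] lemma fdef_mk (n m kk hh : ℕ) (a b : Fin n ⊕ Fin n × Fin m) :
    fdef n m kk hh s(a, b) = gfun n m kk hh a b := rfl

lemma fdef_zero_or_one (n m kk hh : ℕ) (e : Sym2 (Fin n ⊕ Fin n × Fin m)) :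
    fdef n m kk hh e = 0 ∨ fdef n m kk hh e = 1 := by
  induction e using Sym2.ind with
  | _ a b =>
    rw [fdef_mk]
    rcases a with i | p <;> rcases b with j | q <;> simp only [gfun] <;> split <;> simp

lemma corona_adj {α β : Type*} (G : SimpleGraph α) (H : SimpleGraph β)
    (u v : α ⊕ α × β) : (corona G H).Adj u v ↔ coronaAdj G H u v := Iff.rfl

section Counting

lemma card_val_lt (N c : ℕ) (h : c < N) :
    ((univ : Finset (Fin N)).filter (fun i => i.val < c)).card = c := by
  have : ((univ : Finset (Fin N)).filter (fun i => i.val < c)) = Finset.Iio ⟨c, h⟩ := by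
    ext i
    simp [Fin.lt_def]
  rw [this, Fin.card_Iio]

lemma card_val_eq (N c : ℕ) (h : c < N) :
    ((univ : Finset (Fin N)).filter (fun i => i.val = c)).card = 1 := by
  have : ((univ : Finset (Fin N)).filter (fun i => i.val = c)) = {⟨c, h⟩} := by
    ext i
    simp [Fin.ext_iff]
  rw [this, Finset.card_singleton]

lemma card_prod_filter {N M : ℕ} (P : Fin N → Prop) (Q : Fin M → Prop)
    [DecidablePred P] [DecidablePred Q] :
    ((univ : Finset (Fin N × Fin M)).filter (fun p => P p.1 ∧ Q p.2)).card =
      (univ.filter P).card * (univ.filter Q).card := by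
  rw [← Finset.univ_product_univ, Finset.filter_product, Finset.card_product]

lemma card_filter_sum {α β : Type*} [Fintype α] [Fintype β]
    (p : α ⊕ β → Prop) [DecidablePred p] :
    ((univ : Finset (α ⊕ β)).filter p).card =
      (univ.filter (fun a => p (Sum.inl a))).card +
        (univ.filter (fun b => p (Sum.inr b))).card := by
  rw [← Finset.univ_disjSum_univ]
  have : ((univ : Finset α).disjSum (univ : Finset β)).filter p =
      ((univ : Finset α).filter (fun a => p (Sum.inl a))).disjSum
        ((univ : Finset β).filter (fun b => p (Sum.inr b))) := by
    ext x
    rcases x with a | b <;> simp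
  rw [this, Finset.card_disjSum]

/-- count of the main product predicate -/
lemma card_main_pred {n m kk hh : ℕ} (hk : kk < n) (hhm : hh < m) :
    ((univ : Finset (Fin n × Fin m)).filter
        (fun p => p.1.val < kk ∨ (p.1.val = kk ∧ p.2.val < hh))).card = kk * m + hh := by
  rw [Finset.filter_or]
  rw [Finset.card_union_of_disjoint]
  · have h1 : ((univ : Finset (Fin n × Fin m)).filter (fun p => p.1.val < kk)).card = kk * m := by
      have : ((univ : Finset (Fin n × Fin m)).filter (fun p => p.1.val < kk)) =
          (univ : Finset (Fin n × Fin m)).filter (fun p => p.1.val < kk ∧ p.2.val < m) := by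
        apply Finset.filter_congr
        intro p _
        simp [p.2.isLt]
      rw [this, card_prod_filter (fun i : Fin n => i.val < kk) (fun x : Fin m => x.val < m),
        card_val_lt n kk hk]
      have : ((univ : Finset (Fin m)).filter (fun x => x.val < m)) = univ := by
        ext x; simp [x.isLt]
      rw [this, Finset.card_univ, Fintype.card_fin]
    have h2 : ((univ : Finset (Fin n × Fin m)).filter
        (fun p => p.1.val = kk ∧ p.2.val < hh)).card = hh := by
      rw [card_prod_filter (fun i : Fin n => i.val = kk) (fun x : Fin m => x.val < hh),
        card_val_eq n kk hk, card_val_lt m hh hhm, one_mul]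
    rw [h1, h2]
  · rw [Finset.disjoint_left]
    intro p hp hq
    simp only [Finset.mem_filter] at hp hq
    omega

end Counting


section Edges

variable (n m : ℕ)

noncomputable def EA : Finset (Sym2 (Fin n ⊕ Fin n × Fin m)) :=
  ((univ : Finset (Fin n)).filter (fun i => i.val + 1 < n)).image
    (fun i => s(Sum.inl i, Sum.inl (fsucc i)))

noncomputable def EB : Finset (Sym2 (Fin n ⊕ Fin n × Fin m)) :=
  (univ : Finset (Fin n × Fin m)).image (fun p => s(Sum.inl p.1, Sum.inr p))

noncomputable def EC : Finset (Sym2 (Fin n ⊕ Fin n × Fin m)) :=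
  ((univ : Finset (Fin n × Fin m)).filter (fun p => p.2.val + 1 < m)).image
    (fun p => s(Sum.inr p, Sum.inr (p.1, fsucc p.2)))

lemma edge_decomp :
    (corona (pathGraph n) (pathGraph m)).edgeFinset = EA n m ∪ EB n m ∪ EC n m := by
  ext e
  induction e using Sym2.ind with
  | _ u v =>
    simp only [SimpleGraph.mem_edgeFinset, SimpleGraph.mem_edgeSet, Finset.mem_union, EA, EB, EC,
      Finset.mem_image, Finset.mem_filter, Finset.mem_univ, true_and]
    rw [corona_adj]
    constructor
    · rcases u with i | ⟨p1, p2⟩ <;> rcases v with j | ⟨q1, q2⟩ <;> intro h <;>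
        simp only [coronaAdj] at h
      · rw [pathGraph_adj] at h
        rcases h with h | h
        · refine Or.inl (Or.inl ⟨i, by omega, ?_⟩)
          have : fsucc i = j := by
            apply Fin.ext
            rw [fsucc_val i (by omega)]
            exact h
          rw [this]
        · refine Or.inl (Or.inl ⟨j, by omega, ?_⟩)
          have : fsucc j = i := by
            apply Fin.ext
            rw [fsucc_val j (by omega)]
            exact h
          rw [this, Sym2.eq_swap]
      · subst h
        exact Or.inl (Or.inr ⟨(i, q2), rfl⟩)
      · subst h
        refine Or.inl (Or.inr ⟨(j, p2), ?_⟩)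
        rw [Sym2.eq_swap]
      · obtain ⟨h1, h2⟩ := h
        rw [pathGraph_adj] at h2
        have hq2 := q2.isLt
        have hp2 := p2.isLt
        subst h1
        rcases h2 with h2 | h2
        · refine Or.inr ⟨(p1, p2), by simpa using by omega, ?_⟩
          have : fsucc p2 = q2 := by
            apply Fin.ext
            rw [fsucc_val p2 (by omega)]
            exact h2
          rw [show ((p1, p2).1, fsucc (p1, p2).2) = (p1, q2) from by
            simp only [this]]
        · refine Or.inr ⟨(p1, q2), by simpa using by omega, ?_⟩
          have : fsucc q2 = p2 := by
            apply Fin.ext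
            rw [fsucc_val q2 (by omega)]
            exact h2
          rw [show ((p1, q2).1, fsucc (p1, q2).2) = (p1, p2) from by
            simp only [this], Sym2.eq_swap]
    · rintro ((⟨i, hi, he⟩ | ⟨p, he⟩) | ⟨p, hp, he⟩) <;> rw [Sym2.eq_iff] at he
      · rcases he with ⟨rfl, rfl⟩ | ⟨rfl, rfl⟩ <;>
          simp only [coronaAdj] <;> rw [pathGraph_adj] <;>
          [left; right] <;> exact (fsucc_val i hi).symm
      · rcases he with ⟨rfl, rfl⟩ | ⟨rfl, rfl⟩ <;> simp only [coronaAdj]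
      · rcases he with ⟨rfl, rfl⟩ | ⟨rfl, rfl⟩ <;> simp only [coronaAdj] <;>
          refine ⟨by trivial, ?_⟩ <;> rw [pathGraph_adj] <;>
          [left; right] <;> exact (fsucc_val p.2 hp).symm

lemma card_EA_filter (P : Sym2 (Fin n ⊕ Fin n × Fin m) → Prop) [DecidablePred P] :
    ((EA n m).filter P).card =
      (((univ : Finset (Fin n)).filter (fun i => i.val + 1 < n)).filter
        (fun i => P s(Sum.inl i, Sum.inl (fsucc i)))).card := by
  rw [EA, Finset.filter_image]
  apply Finset.card_image_of_injOn
  intro a ha b hb hab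
  simp only [Finset.coe_filter, Set.mem_setOf_eq, Finset.mem_filter, Finset.mem_univ,
    true_and] at ha hb
  rw [Sym2.eq_iff] at hab
  rcases hab with ⟨h1, _⟩ | ⟨h1, h2⟩
  · exact Sum.inl.inj h1
  · have e1 : a = fsucc b := Sum.inl.inj h1
    have e2 : fsucc a = b := Sum.inl.inj h2
    have v1 : a.val = b.val + 1 := by rw [e1, fsucc_val b hb.1]
    have v2 : a.val + 1 = b.val := by rw [← fsucc_val a ha.1, e2]
    omega

lemma card_EB_filter (P : Sym2 (Fin n ⊕ Fin n × Fin m) → Prop) [DecidablePred P] :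
    ((EB n m).filter P).card =
      ((univ : Finset (Fin n × Fin m)).filter
        (fun p => P s(Sum.inl p.1, Sum.inr p))).card := by
  rw [EB, Finset.filter_image]
  apply Finset.card_image_of_injOn
  intro a _ b _ hab
  rw [Sym2.eq_iff] at hab
  rcases hab with ⟨_, h2⟩ | ⟨h1, _⟩
  · exact Sum.inr.inj h2
  · exact absurd h1 (by simp)

lemma card_EC_filter (P : Sym2 (Fin n ⊕ Fin n × Fin m) → Prop) [DecidablePred P] :
    ((EC n m).filter P).card =
      (((univ : Finset (Fin n × Fin m)).filter (fun p => p.2.val + 1 < m)).filter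
        (fun p => P s(Sum.inr p, Sum.inr (p.1, fsucc p.2)))).card := by
  rw [EC, Finset.filter_image]
  apply Finset.card_image_of_injOn
  intro a ha b hb hab
  simp only [Finset.coe_filter, Set.mem_setOf_eq, Finset.mem_filter, Finset.mem_univ,
    true_and] at ha hb
  rw [Sym2.eq_iff] at hab
  rcases hab with ⟨h1, _⟩ | ⟨h1, h2⟩
  · exact Sum.inr.inj h1
  · have e1 : a = (b.1, fsucc b.2) := Sum.inr.inj h1
    have e2 : (a.1, fsucc a.2) = b := Sum.inr.inj h2
    have v1 : a.2.val = (fsucc b.2).val := congrArg (fun p : Fin n × Fin m => p.2.val) e1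
    have v2 : (fsucc a.2).val = b.2.val := congrArg (fun p : Fin n × Fin m => p.2.val) e2
    rw [fsucc_val b.2 hb.1] at v1
    rw [fsucc_val a.2 ha.1] at v2
    omega

lemma disj_EA_EB : Disjoint (EA n m) (EB n m) := by
  rw [Finset.disjoint_left]
  rintro e he1 he2
  rw [EA, Finset.mem_image] at he1
  rw [EB, Finset.mem_image] at he2
  obtain ⟨a, _, ha⟩ := he1
  obtain ⟨b, _, hb⟩ := he2
  rw [← ha, Sym2.eq_iff] at hb
  rcases hb with ⟨_, h⟩ | ⟨_, h⟩ <;> exact absurd h (by simp)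

lemma disj_EA_EC : Disjoint (EA n m) (EC n m) := by
  rw [Finset.disjoint_left]
  rintro e he1 he2
  rw [EA, Finset.mem_image] at he1
  rw [EC, Finset.mem_image] at he2
  obtain ⟨a, _, ha⟩ := he1
  obtain ⟨b, _, hb⟩ := he2
  rw [← ha, Sym2.eq_iff] at hb
  rcases hb with ⟨h, _⟩ | ⟨_, h⟩ <;> exact absurd h (by simp)

lemma disj_EB_EC : Disjoint (EB n m) (EC n m) := by
  rw [Finset.disjoint_left]
  rintro e he1 he2
  rw [EB, Finset.mem_image] at he1
  rw [EC, Finset.mem_image] at he2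
  obtain ⟨a, _, ha⟩ := he1
  obtain ⟨b, _, hb⟩ := he2
  rw [← ha, Sym2.eq_iff] at hb
  rcases hb with ⟨h, _⟩ | ⟨_, h⟩ <;> exact absurd h (by simp)

lemma card_edge_filter (P : Sym2 (Fin n ⊕ Fin n × Fin m) → Prop) [DecidablePred P] :
    ((corona (pathGraph n) (pathGraph m)).edgeFinset.filter P).card =
      (((univ : Finset (Fin n)).filter (fun i => i.val + 1 < n)).filter
        (fun i => P s(Sum.inl i, Sum.inl (fsucc i)))).card +
      ((univ : Finset (Fin n × Fin m)).filter
        (fun p => P s(Sum.inl p.1, Sum.inr p))).card +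
      (((univ : Finset (Fin n × Fin m)).filter (fun p => p.2.val + 1 < m)).filter
        (fun p => P s(Sum.inr p, Sum.inr (p.1, fsucc p.2)))).card := by
  have d1 : Disjoint ((EA n m).filter P) ((EB n m).filter P) :=
    Finset.disjoint_filter_filter (disj_EA_EB n m)
  have d2 : Disjoint (((EA n m).filter P) ∪ ((EB n m).filter P)) ((EC n m).filter P) := by
    rw [Finset.disjoint_union_left]
    exact ⟨Finset.disjoint_filter_filter (disj_EA_EC n m),
      Finset.disjoint_filter_filter (disj_EB_EC n m)⟩
  rw [edge_decomp, Finset.filter_union, Finset.filter_union,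
    Finset.card_union_of_disjoint d2, Finset.card_union_of_disjoint d1,
    card_EA_filter, card_EB_filter, card_EC_filter]

end Edges

section Labels

variable (n m kk hh : ℕ)

/-- predicate for vertices labeled 1 -/
def Pv : Fin n ⊕ Fin n × Fin m → Prop
  | Sum.inl i => i.val < kk
  | Sum.inr p => p.1.val < kk ∨ (p.1.val = kk ∧ p.2.val < hh)

lemma label_eq (hn : n = 2 * kk + 1) (hm : m = 2 * hh) (hk : 1 ≤ kk) (hh1 : 1 ≤ hh)
    (v : Fin n ⊕ Fin n × Fin m) :
    inducedLabel (corona (pathGraph n) (pathGraph m)) (fdef n m kk hh) v =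
      if Pv n m kk hh v then 1 else 0 := by
  rcases v with i | q <;> simp only [Pv]
  · by_cases hik : i.val < kk
    · simp only [hik, ↓reduceIte]
      apply Finset.prod_eq_one
      intro u hu
      rw [Finset.mem_filter] at hu
      have hadj := hu.2
      rw [corona_adj] at hadj
      rcases u with j | w
      · simp only [coronaAdj] at hadj
        rw [pathGraph_adj] at hadj
        rw [fdef_mk]
        simp only [gfun]
        rw [if_pos]
        omega
      · simp only [coronaAdj] at hadj
        rw [fdef_mk]
        simp only [gfun]
        rw [if_pos]
        left
        omega
    · simp only [hik, ↓reduceIte]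
      by_cases hik2 : i.val = kk
      · apply Finset.prod_eq_zero (i := Sum.inl (⟨kk + 1, by omega⟩ : Fin n))
        · rw [Finset.mem_filter]
          refine ⟨Finset.mem_univ _, ?_⟩
          rw [corona_adj]
          simp only [coronaAdj]
          rw [pathGraph_adj]
          left
          simp [hik2]
        · rw [fdef_mk]
          simp only [gfun]
          rw [if_neg]
          omega
      · apply Finset.prod_eq_zero (i := Sum.inr ((i, ⟨0, by omega⟩) : Fin n × Fin m))
        · rw [Finset.mem_filter]
          exact ⟨Finset.mem_univ _, rfl⟩
        · rw [fdef_mk]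
          simp only [gfun]
          rw [if_neg]
          omega
  · by_cases hq : q.1.val < kk ∨ (q.1.val = kk ∧ q.2.val < hh)
    · simp only [hq, ↓reduceIte]
      apply Finset.prod_eq_one
      intro u hu
      rw [Finset.mem_filter] at hu
      have hadj := hu.2
      rw [corona_adj] at hadj
      rcases u with j | w
      · simp only [coronaAdj] at hadj
        rw [fdef_mk]
        simp only [gfun]
        rw [if_pos hq]
      · simp only [coronaAdj] at hadj
        obtain ⟨h1, h2⟩ := hadj
        have h1' : q.1.val = w.1.val := congrArg Fin.val h1
        rw [fdef_mk]
        simp only [gfun]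
        rw [if_pos]
        omega
    · simp only [hq, ↓reduceIte]
      apply Finset.prod_eq_zero (i := Sum.inl q.1)
      · rw [Finset.mem_filter]
        exact ⟨Finset.mem_univ _, rfl⟩
      · rw [fdef_mk]
        simp only [gfun]
        rw [if_neg hq]

lemma vcount_one (hn : n = 2 * kk + 1) (hm : m = 2 * hh) (hk : 1 ≤ kk) (hh1 : 1 ≤ hh) :
    vCount (corona (pathGraph n) (pathGraph m)) (fdef n m kk hh) 1 = kk * m + kk + hh := by
  rw [vCount]
  have hcongr : (univ : Finset (Fin n ⊕ Fin n × Fin m)).filter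
      (fun v => inducedLabel (corona (pathGraph n) (pathGraph m)) (fdef n m kk hh) v = 1) =
      univ.filter (Pv n m kk hh) := by
    apply Finset.filter_congr
    intro v _
    rw [label_eq n m kk hh hn hm hk hh1 v]
    split <;> simp_all
  rw [hcongr, card_filter_sum]
  have h1 : ((univ : Finset (Fin n)).filter (fun a => Pv n m kk hh (Sum.inl a))).card = kk := by
    have : ((univ : Finset (Fin n)).filter (fun a => Pv n m kk hh (Sum.inl a))) =
        univ.filter (fun a => a.val < kk) := by
      apply Finset.filter_congr
      intro a _
      simp [Pv]
    rw [this, card_val_lt n kk (by omega)]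
  have h2 : ((univ : Finset (Fin n × Fin m)).filter
      (fun b => Pv n m kk hh (Sum.inr b))).card = kk * m + hh := by
    have : ((univ : Finset (Fin n × Fin m)).filter (fun b => Pv n m kk hh (Sum.inr b))) =
        univ.filter (fun p => p.1.val < kk ∨ (p.1.val = kk ∧ p.2.val < hh)) := by
      apply Finset.filter_congr
      intro b _
      simp [Pv]
    rw [this, card_main_pred (by omega) (by omega)]
  rw [h1, h2]
  ring

lemma vcount_zero (hn : n = 2 * kk + 1) (hm : m = 2 * hh) (hk : 1 ≤ kk) (hh1 : 1 ≤ hh) :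
    vCount (corona (pathGraph n) (pathGraph m)) (fdef n m kk hh) 0 = kk * m + kk + hh + 1 := by
  have key := Finset.card_filter_add_card_filter_not
    (s := (univ : Finset (Fin n ⊕ Fin n × Fin m)))
    (p := fun v => inducedLabel (corona (pathGraph n) (pathGraph m)) (fdef n m kk hh) v = 1)
  have hcard : Fintype.card (Fin n ⊕ Fin n × Fin m) = n + n * m := by
    simp [Fintype.card_sum, Fintype.card_prod]
  have hzero : vCount (corona (pathGraph n) (pathGraph m)) (fdef n m kk hh) 0 =
      ((univ : Finset (Fin n ⊕ Fin n × Fin m)).filter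
        (fun v => ¬ inducedLabel (corona (pathGraph n) (pathGraph m)) (fdef n m kk hh) v = 1)).card := by
    rw [vCount]
    congr 1
    apply Finset.filter_congr
    intro v _
    rw [label_eq n m kk hh hn hm hk hh1 v]
    split <;> simp
  have hone := vcount_one n m kk hh hn hm hk hh1
  rw [vCount] at hone
  rw [Finset.card_univ, hcard] at key
  rw [hzero]
  have hnm : n * m = 2 * (kk * m) + m := by rw [hn]; ring
  omega

end Labels

section ECounts

variable (n m kk hh : ℕ)

lemma ecount_one (hn : n = 2 * kk + 1) (hm : m = 2 * hh) (hk : 1 ≤ kk) (hh1 : 1 ≤ hh) :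
    eCount (corona (pathGraph n) (pathGraph m)) (fdef n m kk hh) 1 =
      kk + (kk * m + hh) + (kk * (m - 1) + hh) := by
  rw [eCount, card_edge_filter]
  -- term 1
  have t1 : (((univ : Finset (Fin n)).filter (fun i => i.val + 1 < n)).filter
      (fun i => fdef n m kk hh s(Sum.inl i, Sum.inl (fsucc i)) = 1)).card = kk := by
    rw [Finset.filter_filter]
    have : ((univ : Finset (Fin n)).filter (fun i => i.val + 1 < n ∧
        fdef n m kk hh s(Sum.inl i, Sum.inl (fsucc i)) = 1)) =
        univ.filter (fun i => i.val < kk) := by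
      apply Finset.filter_congr
      intro i _
      constructor
      · rintro ⟨hb, hv⟩
        rw [fdef_mk] at hv
        simp only [gfun, fsucc_val i hb] at hv
        split at hv
        · omega
        · omega
      · intro hi
        have hb : i.val + 1 < n := by omega
        refine ⟨hb, ?_⟩
        rw [fdef_mk]
        simp only [gfun, fsucc_val i hb]
        rw [if_pos (by omega)]
    rw [this, card_val_lt n kk (by omega)]
  -- term 2
  have t2 : (((univ : Finset (Fin n × Fin m))).filter
      (fun p => fdef n m kk hh s(Sum.inl p.1, Sum.inr p) = 1)).card = kk * m + hh := by
    have : (((univ : Finset (Fin n × Fin m))).filter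
        (fun p => fdef n m kk hh s(Sum.inl p.1, Sum.inr p) = 1)) =
        univ.filter (fun p => p.1.val < kk ∨ (p.1.val = kk ∧ p.2.val < hh)) := by
      apply Finset.filter_congr
      intro p _
      rw [fdef_mk]
      simp only [gfun]
      split
      · simp_all
      · simp_all
    rw [this, card_main_pred (by omega) (by omega)]
  -- term 3
  have t3 : (((univ : Finset (Fin n × Fin m)).filter (fun p => p.2.val + 1 < m)).filter
      (fun p => fdef n m kk hh s(Sum.inr p, Sum.inr (p.1, fsucc p.2)) = 1)).card =
      kk * (m - 1) + hh := by
    rw [Finset.filter_filter]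
    have : ((univ : Finset (Fin n × Fin m)).filter (fun p => p.2.val + 1 < m ∧
        fdef n m kk hh s(Sum.inr p, Sum.inr (p.1, fsucc p.2)) = 1)) =
        univ.filter (fun p => (p.1.val < kk ∧ p.2.val < m - 1) ∨
          (p.1.val = kk ∧ p.2.val < hh)) := by
      apply Finset.filter_congr
      intro p _
      constructor
      · rintro ⟨hb, hv⟩
        rw [fdef_mk] at hv
        simp only [gfun, fsucc_val p.2 hb] at hv
        split at hv
        · omega
        · omega
      · intro hp
        have hb : p.2.val + 1 < m := by omega
        refine ⟨hb, ?_⟩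
        rw [fdef_mk]
        simp only [gfun, fsucc_val p.2 hb]
        rw [if_pos (by omega)]
    rw [this, Finset.filter_or, Finset.card_union_of_disjoint]
    · rw [card_prod_filter (fun i : Fin n => i.val < kk) (fun x : Fin m => x.val < m - 1),
        card_prod_filter (fun i : Fin n => i.val = kk) (fun x : Fin m => x.val < hh),
        card_val_lt n kk (by omega), card_val_lt m (m - 1) (by omega),
        card_val_eq n kk (by omega), card_val_lt m hh (by omega), one_mul]
    · rw [Finset.disjoint_left]
      intro p hp hq
      simp only [Finset.mem_filter] at hp hq
      omega
  rw [t1, t2, t3]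

lemma card_edges (hn : n = 2 * kk + 1) (hm : m = 2 * hh) (hk : 1 ≤ kk) (hh1 : 1 ≤ hh) :
    (corona (pathGraph n) (pathGraph m)).edgeFinset.card = (n - 1) + n * m + n * (m - 1) := by
  have := card_edge_filter n m (fun _ => True)
  rw [Finset.filter_true_of_mem (fun _ _ => trivial),
    Finset.filter_true_of_mem (fun _ _ => trivial),
    Finset.filter_true_of_mem (fun _ _ => trivial),
    Finset.filter_true_of_mem (fun _ _ => trivial)] at this
  rw [this]
  have c1 : ((univ : Finset (Fin n)).filter (fun i => i.val + 1 < n)).card = n - 1 := by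
    have : ((univ : Finset (Fin n)).filter (fun i => i.val + 1 < n)) =
        univ.filter (fun i => i.val < n - 1) := by
      apply Finset.filter_congr
      intro i _
      omega
    rw [this, card_val_lt n (n - 1) (by omega)]
  have c2 : ((univ : Finset (Fin n × Fin m))).card = n * m := by
    simp [Finset.card_univ]
  have c3 : ((univ : Finset (Fin n × Fin m)).filter (fun p => p.2.val + 1 < m)).card =
      n * (m - 1) := by
    have : ((univ : Finset (Fin n × Fin m)).filter (fun p => p.2.val + 1 < m)) =
        univ.filter (fun p => p.1.val < n ∧ p.2.val < m - 1) := by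
      apply Finset.filter_congr
      intro p _
      have := p.1.isLt
      omega
    rw [this, card_prod_filter (fun i : Fin n => i.val < n) (fun x : Fin m => x.val < m - 1),
      card_val_lt m (m - 1) (by omega)]
    have : ((univ : Finset (Fin n)).filter (fun i => i.val < n)) = univ := by
      ext i
      simp [i.isLt]
    rw [this, Finset.card_univ, Fintype.card_fin]
  rw [c1, c2, c3]

lemma ecount_zero (hn : n = 2 * kk + 1) (hm : m = 2 * hh) (hk : 1 ≤ kk) (hh1 : 1 ≤ hh) :
    eCount (corona (pathGraph n) (pathGraph m)) (fdef n m kk hh) 0 =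
      (n - 1) + n * m + n * (m - 1) - (kk + (kk * m + hh) + (kk * (m - 1) + hh)) := by
  have key := Finset.card_filter_add_card_filter_not
    (s := (corona (pathGraph n) (pathGraph m)).edgeFinset)
    (p := fun e => fdef n m kk hh e = 1)
  have hzero : eCount (corona (pathGraph n) (pathGraph m)) (fdef n m kk hh) 0 =
      ((corona (pathGraph n) (pathGraph m)).edgeFinset.filter
        (fun e => ¬ fdef n m kk hh e = 1)).card := by
    rw [eCount]
    congr 1
    apply Finset.filter_congr
    intro e _
    rcases fdef_zero_or_one n m kk hh e with h | h <;> simp [h]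
  have hone := ecount_one n m kk hh hn hm hk hh1
  rw [eCount] at hone
  rw [card_edges n m kk hh hn hm hk hh1] at key
  rw [hzero]
  omega

end ECounts

end CoronaTEPC


/-- For odd `n ≥ 3` and even `m ≥ 2`, the corona graph `P_n ∘ P_m` admits an
edge labeling with `e_f(0) = nm - 1`, `e_f(1) = nm`, `v_f(0) = (nm + n + 1)/2`,
`v_f(1) = (n + nm - 1)/2`; in particular it is total edge product cordial. -/
theorem corona_path_path_odd_even_counts (n m : ℕ) (hn : 3 ≤ n) (hno : Odd n)
    (hm : 2 ≤ m) (hme : Even m) :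
    ∃ f : Sym2 (Fin n ⊕ Fin n × Fin m) → ℕ,
      (∀ e ∈ (corona (pathGraph n) (pathGraph m)).edgeSet, f e = 0 ∨ f e = 1) ∧
      eCount (corona (pathGraph n) (pathGraph m)) f 0 = n * m - 1 ∧
      eCount (corona (pathGraph n) (pathGraph m)) f 1 = n * m ∧
      vCount (corona (pathGraph n) (pathGraph m)) f 0 = (n * m + n + 1) / 2 ∧
      vCount (corona (pathGraph n) (pathGraph m)) f 1 = (n + n * m - 1) / 2 ∧
      |((vCount (corona (pathGraph n) (pathGraph m)) f 0 : ℤ) +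
          (eCount (corona (pathGraph n) (pathGraph m)) f 0 : ℤ)) -
        ((vCount (corona (pathGraph n) (pathGraph m)) f 1 : ℤ) +
          (eCount (corona (pathGraph n) (pathGraph m)) f 1 : ℤ))| ≤ 1 := by
  classical
  obtain ⟨t, ht⟩ := hno
  obtain ⟨s, hs⟩ := hme
  have hn' : n = 2 * t + 1 := by omega
  have hm' : m = 2 * s := by omega
  have hk : 1 ≤ t := by omega
  have hh1 : 1 ≤ s := by omega
  have A : n * m = 2 * (t * m) + m := by rw [hn']; ring
  have C : t * m = t * (m - 1) + t * 1 := by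
    rw [← Nat.mul_add]
    congr 1
    omega
  have B : n * (m - 1) = 2 * (t * (m - 1)) + (m - 1) := by rw [hn']; ring
  have he1 := CoronaTEPC.ecount_one n m t s hn' hm' hk hh1
  have he0 := CoronaTEPC.ecount_zero n m t s hn' hm' hk hh1
  have hv1 := CoronaTEPC.vcount_one n m t s hn' hm' hk hh1
  have hv0 := CoronaTEPC.vcount_zero n m t s hn' hm' hk hh1
  have he1' : eCount (corona (pathGraph n) (pathGraph m)) (CoronaTEPC.fdef n m t s) 1 =
      n * m := by omega
  have he0' : eCount (corona (pathGraph n) (pathGraph m)) (CoronaTEPC.fdef n m t s) 0 =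
      n * m - 1 := by omega
  have hv0' : vCount (corona (pathGraph n) (pathGraph m)) (CoronaTEPC.fdef n m t s) 0 =
      (n * m + n + 1) / 2 := by omega
  have hv1' : vCount (corona (pathGraph n) (pathGraph m)) (CoronaTEPC.fdef n m t s) 1 =
      (n + n * m - 1) / 2 := by omega
  refine ⟨CoronaTEPC.fdef n m t s, fun e _ => CoronaTEPC.fdef_zero_or_one n m t s e,
    he0', he1', hv0', hv1', ?_⟩
  rw [he0', he1', hv0', hv1']
  rw [abs_le]
  constructor <;> omega
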